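/- arXiv:1905.07966 — 2 statements merged into one kernel-verified Lean document; each statement's English description precedes it below -/
import Mathlib

section
/- Exactness of the box bound under disjoint supports (Proposition 9): if the supports X_{ρ^l ≠ 0} = {x ∈ X : ρ^l(x) ≠ 0} are pairwise disjoint for distinct components l, then M⁺ = ∏_{l=1}^{m} M⁺_l. -/
/-- Proposition 9: with pairwise disjoint supports, M⁺ equals the box
∏_l M⁺_l. -/
theorem uplift_prop9 {n m : ℕ} (X : Set (Fin n → ℝ)) (hX : X.Nonempty)
    (hXc : IsCompact X) (π : (Fin n → ℝ) → ℝ) (hπ : ContinuousOn π X)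
    (πplus : ℝ) (hmax : IsGreatest (π '' X) πplus)
    (ρ : (Fin n → ℝ) → Fin m → ℝ) (hρ : ∀ x ∈ X, ∀ k, ρ x k ≤ 0)
    (hdisj : ∀ l l' : Fin m, l ≠ l' →
      ∀ x ∈ X, ρ x l ≠ 0 → ρ x l' = 0) :
    {μ : Fin m → ℝ | (∀ k, 0 ≤ μ k) ∧
        ∀ x ∈ X, π x - πplus ≤ ∑ k, μ k * ρ x k}
      = {μ : Fin m → ℝ | ∀ l,
          μ l ∈ {t : ℝ | 0 ≤ t ∧ ∀ x ∈ X, π x - πplus ≤ t * ρ x l}} := by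
  ext μ
  simp only [Set.mem_setOf_eq]
  constructor
  · rintro ⟨hpos, hineq⟩ l
    refine ⟨hpos l, fun x hx => ?_⟩
    refine (hineq x hx).trans ?_
    have h1 : ∑ k, μ k * ρ x k
        = μ l * ρ x l + ∑ k ∈ Finset.univ.erase l, μ k * ρ x k := by
      exact (Finset.add_sum_erase _ (fun k => μ k * ρ x k) (Finset.mem_univ l)).symm
    rw [h1]
    have h2 : ∑ k ∈ Finset.univ.erase l, μ k * ρ x k ≤ 0 :=
      Finset.sum_nonpos fun k _ =>
        mul_nonpos_of_nonneg_of_nonpos (hpos k) (hρ x hx k)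
    linarith
  · intro h
    refine ⟨fun k => (h k).1, fun x hx => ?_⟩
    by_cases hc : ∃ l, ρ x l ≠ 0
    · obtain ⟨l, hl⟩ := hc
      have hsum : ∑ k, μ k * ρ x k = μ l * ρ x l := by
        refine Finset.sum_eq_single l (fun k _ hk => ?_) (fun h => absurd (Finset.mem_univ l) h)
        rw [hdisj l k (Ne.symm hk) x hx hl, mul_zero]
      rw [hsum]
      exact (h l).2 x hx
    · push_neg at hc
      have hsum : ∑ k, μ k * ρ x k = 0 :=
        Finset.sum_eq_zero fun k _ => by rw [hc k, mul_zero]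
      rw [hsum]
      have := hmax.2 ⟨x, hx, rfl⟩
      linarith
end

section
/- Necessary condition for zero uplift (Proposition 10): if ρ(x) ≤ 0 on X and min_{μ∈M⁺} U(μ) = 0, where U(μ) = π⁺ − π(x*) + μᵀρ(x*), then Σ_{l: M⁺_l bounded} μ_l^max · ρ^l(x*) ≤ π(x*) − π⁺, where μ_l^max is the maximum element of M⁺_l. -/
/-- Proposition 10: necessary condition for zero uplift in terms of the
maximal single-constraint multipliers. -/
theorem uplift_prop10 {n m : ℕ} (X : Set (Fin n → ℝ)) (hX : X.Nonempty)
    (hXc : IsCompact X) (π : (Fin n → ℝ) → ℝ) (hπ : ContinuousOn π X)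
    (πplus : ℝ) (hmax : IsGreatest (π '' X) πplus)
    (xstar : Fin n → ℝ) (hxstar : xstar ∈ X)
    (ρ : (Fin n → ℝ) → Fin m → ℝ) (hρ : ∀ x ∈ X, ∀ k, ρ x k ≤ 0)
    (B : Finset (Fin m)) (μmax : Fin m → ℝ)
    (hB : ∀ l ∈ B,
      IsGreatest {t : ℝ | 0 ≤ t ∧ ∀ x ∈ X, π x - πplus ≤ t * ρ x l} (μmax l))
    (hBc : ∀ l ∉ B,
      ¬ BddAbove {t : ℝ | 0 ≤ t ∧ ∀ x ∈ X, π x - πplus ≤ t * ρ x l})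
    (hzero : IsLeast ((fun μ : Fin m → ℝ =>
        πplus - π xstar + ∑ k, μ k * ρ xstar k) ''
      {μ : Fin m → ℝ | (∀ k, 0 ≤ μ k) ∧
        ∀ x ∈ X, π x - πplus ≤ ∑ k, μ k * ρ x k}) 0) :
    ∑ l ∈ B, μmax l * ρ xstar l ≤ π xstar - πplus := by
  obtain ⟨μ0, ⟨hμ0nn, hμ0c⟩, hμ0eq⟩ := hzero.1
  simp only at hμ0eq
  -- For l ∉ B, ρ xstar l = 0
  have h1 : ∀ l ∉ B, ρ xstar l = 0 := by
    intro l hl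
    by_contra h
    have hneg : ρ xstar l < 0 := lt_of_le_of_ne (hρ xstar hxstar l) h
    apply hBc l hl
    refine ⟨(π xstar - πplus) / ρ xstar l, ?_⟩
    rintro t ⟨-, ht⟩
    rw [le_div_iff_of_neg hneg]
    exact ht xstar hxstar
  -- For l ∈ B, μ0 l ≤ μmax l
  have h2 : ∀ l ∈ B, μ0 l ≤ μmax l := by
    intro l hl
    refine (hB l hl).2 ⟨hμ0nn l, fun x hx => ?_⟩
    refine le_trans (hμ0c x hx) ?_
    have h0 : ∀ k ∈ (Finset.univ : Finset (Fin m)), k ∉ ({l} : Finset (Fin m)) →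
        μ0 k * ρ x k ≤ 0 := fun k _ _ =>
      mul_nonpos_of_nonneg_of_nonpos (hμ0nn k) (hρ x hx k)
    have : ∑ k, μ0 k * ρ x k ≤ ∑ k ∈ {l}, μ0 k * ρ x k := by
      rw [← Finset.sum_sdiff (Finset.subset_univ {l})]
      have hle : ∑ k ∈ Finset.univ \ {l}, μ0 k * ρ x k ≤ 0 :=
        Finset.sum_nonpos fun k hk =>
          mul_nonpos_of_nonneg_of_nonpos (hμ0nn k) (hρ x hx k)
      linarith
    simpa using this
  have hstep : ∑ l ∈ B, μmax l * ρ xstar l ≤ ∑ l ∈ B, μ0 l * ρ xstar l := by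
    refine Finset.sum_le_sum fun l hl => ?_
    exact mul_le_mul_of_nonpos_right (h2 l hl) (hρ xstar hxstar l)
  have hext : ∑ l ∈ B, μ0 l * ρ xstar l = ∑ k, μ0 k * ρ xstar k := by
    refine Finset.sum_subset (Finset.subset_univ _) ?_
    intro k _ hk
    rw [h1 k hk, mul_zero]
  calc ∑ l ∈ B, μmax l * ρ xstar l ≤ ∑ l ∈ B, μ0 l * ρ xstar l := hstep
    _ = ∑ k, μ0 k * ρ xstar k := hext
    _ = π xstar - πplus := by linarith
end
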